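/- Let R be a Noetherian ring of characteristic p, I₁,…,I_t ideals and J_• a p-family with I₁,…,I_t ⊆ √J₁. Then the F-volume is unchanged upon replacing I₁ by its integral closure: Vol_F^{J_•}(I₁,…,I_t) = Vol_F^{J_•}(\overline{I₁}, I₂,…,I_t). Consequently Vol_F^{J_•}(I₁,…,I_t) = Vol_F^{J_•}(\overline{I₁},…,\overline{I_t}). -/

import Mathlib

open Ideal Filter MeasureTheory

/-- The `q`-th Frobenius power of an ideal: the ideal generated by `q`-th powers of its
elements (used with `q = p ^ e`). -/
def Ideal.frobPow {R : Type*} [CommRing R] (J : Ideal R) (q : ℕ) : Ideal R :=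
  Ideal.span ((fun a => a ^ q) '' (J : Set R))

/-- The set `V` of exponent vectors `a ∈ ℕ^t` with `I₁^{a₁} ⋯ I_t^{a_t} ⊄ J'`. -/
def Vnu {R : Type*} [CommRing R] {t : ℕ} (I : Fin t → Ideal R) (J' : Ideal R) :
    Set (Fin t → ℕ) :=
  {a | ¬ (∏ i, I i ^ a i) ≤ J'}

/-- The integral closure of an ideal `I`: the ideal generated by all elements `x`
satisfying an equation `x^n + a₁ x^{n-1} + ⋯ + aₙ = 0` with `aᵢ ∈ I^i`. -/
def Ideal.intCl {R : Type*} [CommRing R] (I : Ideal R) : Ideal R :=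
  Ideal.span {x : R | ∃ n : ℕ, 0 < n ∧ ∃ a : ℕ → R,
    (∀ i, 1 ≤ i → i ≤ n → a i ∈ I ^ i) ∧
    x ^ n + ∑ i ∈ Finset.Icc 1 n, a i * x ^ (n - i) = 0}

section Aux

variable {R : Type*} [CommRing R]

/-- The set of elements integral over `I` (the generating set of `Ideal.intCl`). -/
def intSet (I : Ideal R) : Set R :=
  {x : R | ∃ n : ℕ, 0 < n ∧ ∃ a : ℕ → R,
    (∀ i, 1 ≤ i → i ≤ n → a i ∈ I ^ i) ∧
    x ^ n + ∑ i ∈ Finset.Icc 1 n, a i * x ^ (n - i) = 0}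

lemma intCl_eq (I : Ideal R) : I.intCl = Ideal.span (intSet I) := rfl

lemma sum_le_of_forall_le' {ι : Type*} (s : Finset ι) (f : ι → Ideal R) (J : Ideal R)
    (h : ∀ i ∈ s, f i ≤ J) : ∑ i ∈ s, f i ≤ J := by
  classical
  induction s using Finset.induction_on with
  | empty => simp
  | insert _ _ hx ih =>
    rw [Finset.sum_insert hx, Submodule.add_eq_sup]
    exact sup_le (h _ (Finset.mem_insert_self _ _))
      (ih fun i hi => h i (Finset.mem_insert_of_mem hi))

lemma le_sum_of_mem' {ι : Type*} (s : Finset ι) (f : ι → Ideal R) {j : ι} (hj : j ∈ s) :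
    f j ≤ ∑ i ∈ s, f i := by
  classical
  induction s using Finset.induction_on with
  | empty => cases hj
  | insert _ _ hx ih =>
    rw [Finset.sum_insert hx, Submodule.add_eq_sup]
    rcases Finset.mem_insert.mp hj with h | h
    · exact h ▸ le_sup_left
    · exact (ih h).trans le_sup_right

lemma prod_ideal_mono {ι : Type*} (s : Finset ι) (f g : ι → Ideal R)
    (h : ∀ i ∈ s, f i ≤ g i) : ∏ i ∈ s, f i ≤ ∏ i ∈ s, g i := by
  classical
  induction s using Finset.induction_on with
  | empty => simp
  | insert _ _ hx ih =>
    rw [Finset.prod_insert hx, Finset.prod_insert hx]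
    exact Ideal.mul_mono (h _ (Finset.mem_insert_self _ _))
      (ih fun i hi => h i (Finset.mem_insert_of_mem hi))

lemma prod_le_factor {ι : Type*} [Fintype ι] (f : ι → Ideal R) (j : ι) :
    ∏ i, f i ≤ f j :=
  Ideal.le_of_dvd (Finset.dvd_prod_of_mem f (Finset.mem_univ j))

lemma single_step (B : Ideal R) (x : R) (n : ℕ) (hn : 0 < n) (a : ℕ → R)
    (ha : ∀ i, 1 ≤ i → i ≤ n → a i ∈ B ^ i)
    (heq : x ^ n + ∑ i ∈ Finset.Icc 1 n, a i * x ^ (n - i) = 0) :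
    ∀ m, (B ⊔ Ideal.span {x}) ^ m ≤ B ^ (m - (n - 1)) := by
  classical
  set T : ℕ → Ideal R := fun m => ∑ j ∈ Finset.range n, B ^ (m - j) * Ideal.span {x ^ j}
    with hT
  have hxn : (Ideal.span {x ^ n} : Ideal R) ≤ T n := by
    rw [Ideal.span_le, Set.singleton_subset_iff]
    have hsum : ∑ i ∈ Finset.Icc 1 n, a i * x ^ (n - i) ∈ T n := by
      apply Ideal.sum_mem
      intro i hi
      rcases Finset.mem_Icc.mp hi with ⟨h1, h2⟩
      have hmem : a i * x ^ (n - i) ∈ B ^ (n - (n - i)) * Ideal.span {x ^ (n - i)} := by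
        have h' : n - (n - i) = i := by omega
        rw [h']
        exact Ideal.mul_mem_mul (ha i h1 h2) (Ideal.mem_span_singleton_self _)
      exact (le_sum_of_mem' (Finset.range n)
        (fun j => B ^ (n - j) * Ideal.span {x ^ j})
        (Finset.mem_range.mpr (show n - i < n by omega))) hmem
    have hx : x ^ n = -∑ i ∈ Finset.Icc 1 n, a i * x ^ (n - i) :=
      eq_neg_of_add_eq_zero_left heq
    rw [SetLike.mem_coe, hx]
    exact neg_mem hsum
  have hQ : ∀ m, (B ⊔ Ideal.span {x}) ^ m ≤ T m := by
    intro m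
    induction m with
    | zero =>
      rw [pow_zero, Ideal.one_eq_top]
      have h := le_sum_of_mem' (Finset.range n)
        (fun j => B ^ (0 - j) * Ideal.span {x ^ j}) (Finset.mem_range.mpr hn)
      exact le_trans (le_of_eq (by simp)) h
    | succ m ih =>
      have step : (B ⊔ Ideal.span {x}) ^ (m + 1) ≤ (B ⊔ Ideal.span {x}) * T m := by
        rw [pow_succ]
        calc (B ⊔ Ideal.span {x}) ^ m * (B ⊔ Ideal.span {x})
            ≤ T m * (B ⊔ Ideal.span {x}) := Ideal.mul_mono_left ih
          _ = (B ⊔ Ideal.span {x}) * T m := mul_comm _ _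
      refine step.trans ?_
      rw [Ideal.sup_mul]
      apply sup_le
      · rw [hT, Finset.mul_sum]
        apply sum_le_of_forall_le'
        intro j hj
        have hrw : B * (B ^ (m - j) * Ideal.span {x ^ j})
            = B ^ (m - j + 1) * Ideal.span {x ^ j} := by ring
        rw [hrw]
        refine le_trans ?_ (le_sum_of_mem' _ _ hj)
        exact Ideal.mul_mono_left (Ideal.pow_le_pow_right (by omega))
      · rw [hT, Finset.mul_sum]
        apply sum_le_of_forall_le'
        intro j hj
        have hjn := Finset.mem_range.mp hj
        have hrw : Ideal.span {x} * (B ^ (m - j) * Ideal.span {x ^ j})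
            = B ^ (m - j) * (Ideal.span {x} * Ideal.span {x ^ j}) := by ring
        rw [hrw, Ideal.span_singleton_mul_span_singleton, ← pow_succ']
        rcases Nat.lt_or_ge (j + 1) n with h | h
        · refine le_trans ?_ (le_sum_of_mem' (Finset.range n)
            (fun k => B ^ (m + 1 - k) * Ideal.span {x ^ k}) (Finset.mem_range.mpr h))
          show B ^ (m - j) * Ideal.span {x ^ (j + 1)}
            ≤ B ^ (m + 1 - (j + 1)) * Ideal.span {x ^ (j + 1)}
          have h2 : m + 1 - (j + 1) = m - j := by omega
          rw [h2]
        · have hj1 : j + 1 = n := by omega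
          rw [hj1]
          calc B ^ (m - j) * Ideal.span {x ^ n}
              ≤ B ^ (m - j) * T n := Ideal.mul_mono_right hxn
            _ ≤ T (m + 1) := by
                rw [hT, Finset.mul_sum]
                apply sum_le_of_forall_le'
                intro k hk
                have hkn := Finset.mem_range.mp hk
                have hrw2 : B ^ (m - j) * (B ^ (n - k) * Ideal.span {x ^ k})
                    = B ^ (m - j + (n - k)) * Ideal.span {x ^ k} := by
                  rw [← mul_assoc, ← pow_add]
                rw [hrw2]
                refine le_trans ?_ (le_sum_of_mem' _ _ hk)
                exact Ideal.mul_mono_left (Ideal.pow_le_pow_right (by omega))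
  intro m
  refine (hQ m).trans ?_
  apply sum_le_of_forall_le'
  intro j hj
  have hjn := Finset.mem_range.mp hj
  calc B ^ (m - j) * Ideal.span {x ^ j} ≤ B ^ (m - j) := Ideal.mul_le_left
    _ ≤ B ^ (m - (n - 1)) := Ideal.pow_le_pow_right (by omega)

lemma finset_step (I : Ideal R) (T : Finset R) (hT : ∀ x ∈ T, x ∈ intSet I) :
    ∃ ℓ : ℕ, ∀ m, (I ⊔ Ideal.span ↑T) ^ m ≤ I ^ (m - ℓ) := by
  classical
  induction T using Finset.induction_on with
  | empty =>
    refine ⟨0, fun m => ?_⟩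
    simp [Ideal.span_empty]
  | @insert x T hx ih =>
    obtain ⟨ℓ, hℓ⟩ := ih fun y hy => hT y (Finset.mem_insert_of_mem hy)
    obtain ⟨n, hn, a, ha, heq⟩ := hT x (Finset.mem_insert_self _ _)
    set B := I ⊔ Ideal.span ↑T with hB
    have ha' : ∀ i, 1 ≤ i → i ≤ n → a i ∈ B ^ i := fun i h1 h2 =>
      Ideal.pow_right_mono le_sup_left i (ha i h1 h2)
    have hs := single_step B x n hn a ha' heq
    refine ⟨n - 1 + ℓ, fun m => ?_⟩
    have hseteq : I ⊔ Ideal.span ↑(insert x T) = B ⊔ Ideal.span {x} := by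
      rw [Finset.coe_insert, Ideal.span_insert, hB]
      rw [sup_comm (Ideal.span {x}) (Ideal.span ↑T), ← sup_assoc]
    rw [hseteq]
    calc (B ⊔ Ideal.span {x}) ^ m ≤ B ^ (m - (n - 1)) := hs m
      _ ≤ I ^ (m - (n - 1) - ℓ) := hℓ _
      _ = I ^ (m - (n - 1 + ℓ)) := by rw [Nat.sub_sub]

lemma exists_finset_span_subset {M : Type*} [AddCommMonoid M] [Module R M]
    (G : Finset M) (S : Set M) (h : ∀ g ∈ G, g ∈ Submodule.span R S) :
    ∃ T : Finset M, ↑T ⊆ S ∧ ∀ g ∈ G, g ∈ Submodule.span R (↑T : Set M) := by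
  classical
  induction G using Finset.induction_on with
  | empty => exact ⟨∅, by simp, by simp⟩
  | @insert x G hx ih =>
    obtain ⟨T₁, hT₁, hmem₁⟩ := ih fun g hg => h g (Finset.mem_insert_of_mem hg)
    obtain ⟨T₂, hT₂, hmem₂⟩ := Submodule.mem_span_finite_of_mem_span
      (h x (Finset.mem_insert_self _ _))
    refine ⟨T₁ ∪ T₂, by simp [Set.union_subset, hT₁, hT₂, Finset.coe_union], ?_⟩
    intro g hg
    rcases Finset.mem_insert.mp hg with rfl | hg
    · exact Submodule.span_mono (by simp [Finset.coe_union]) hmem₂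
    · exact Submodule.span_mono (by simp [Finset.coe_union]) (hmem₁ g hg)

lemma le_intCl (I : Ideal R) : I ≤ I.intCl := by
  intro x hx
  apply Ideal.subset_span
  refine ⟨1, one_pos, fun _ => -x, ?_, ?_⟩
  · intro i h1 h2
    have : i = 1 := le_antisymm h2 h1
    subst this
    simpa using neg_mem hx
  · simp

lemma intCl_pow_le [IsNoetherianRing R] (I : Ideal R) :
    ∃ ℓ : ℕ, ∀ m, I.intCl ^ m ≤ I ^ (m - ℓ) := by
  classical
  have hfg : I.intCl.FG := IsNoetherian.noetherian _
  obtain ⟨G, hG⟩ := hfg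
  have hmem : ∀ g ∈ G, g ∈ Submodule.span R (intSet I) := by
    intro g hg
    have : g ∈ I.intCl := hG ▸ Ideal.subset_span (by exact hg)
    exact this
  obtain ⟨T, hTS, hTmem⟩ := exists_finset_span_subset G (intSet I) hmem
  obtain ⟨ℓ, hℓ⟩ := finset_step I T fun x hxT => hTS hxT
  refine ⟨ℓ, fun m => ?_⟩
  have hsub : I.intCl ≤ I ⊔ Ideal.span ↑T := by
    rw [← hG]
    refine le_trans (Submodule.span_le.mpr ?_) le_sup_right
    intro g hg
    exact hTmem g hg
  exact le_trans (Ideal.pow_right_mono hsub m) (hℓ m)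

lemma intSet_subset_radical (I : Ideal R) {Q : Ideal R} (hIQ : I ≤ Q.radical) :
    intSet I ⊆ Q.radical := by
  rintro x ⟨n, hn, a, ha, heq⟩
  have hxn : x ^ n ∈ Q.radical := by
    have hx : x ^ n = -∑ i ∈ Finset.Icc 1 n, a i * x ^ (n - i) :=
      eq_neg_of_add_eq_zero_left heq
    rw [hx]
    apply neg_mem
    apply Ideal.sum_mem
    intro i hi
    rcases Finset.mem_Icc.mp hi with ⟨h1, h2⟩
    have : a i ∈ Q.radical := hIQ (Ideal.pow_le_self (by omega) (ha i h1 h2))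
    exact Ideal.mul_mem_right _ _ this
  exact Ideal.mem_radical_of_pow_mem hxn

lemma pow_mem_family (J : ℕ → Ideal R) (p : ℕ)
    (hfam : ∀ e, (J e).frobPow p ≤ J (e + 1)) {x : R} (hx : x ∈ J 0) :
    ∀ e, x ^ p ^ e ∈ J e := by
  intro e
  induction e with
  | zero => simpa using hx
  | succ e ih =>
    have : x ^ p ^ (e + 1) = (x ^ p ^ e) ^ p := by rw [← pow_mul, pow_succ]
    rw [this]
    apply hfam e
    exact Ideal.subset_span ⟨x ^ p ^ e, ih, rfl⟩

lemma exists_uniform_N (G : Finset R) (Q : Ideal R) (h : ∀ g ∈ G, g ∈ Q.radical) :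
    ∃ N : ℕ, 0 < N ∧ ∀ g ∈ G, g ^ N ∈ Q := by
  classical
  induction G using Finset.induction_on with
  | empty => exact ⟨1, one_pos, by simp⟩
  | @insert x G hx ih =>
    obtain ⟨N₁, hN₁, hmem₁⟩ := ih fun g hg => h g (Finset.mem_insert_of_mem hg)
    obtain ⟨N₂, hN₂⟩ := h x (Finset.mem_insert_self _ _)
    refine ⟨N₁ + N₂, by omega, ?_⟩
    intro g hg
    rcases Finset.mem_insert.mp hg with rfl | hg
    · rw [pow_add]
      exact Ideal.mul_mem_left _ _ hN₂
    · rw [pow_add]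
      exact Ideal.mul_mem_right _ _ (hmem₁ g hg)

lemma span_pow_le (G : Finset R) (Jc : Ideal R) (M : ℕ)
    (hG : ∀ g ∈ G, g ^ M ∈ Jc) :
    ∀ m, G.card * M + 1 ≤ m → (Ideal.span (↑G : Set R)) ^ m ≤ Jc := by
  classical
  induction G using Finset.induction_on with
  | empty =>
    intro m hm
    simp only [Finset.coe_empty, Ideal.span_empty]
    calc (⊥ : Ideal R) ^ m ≤ ⊥ ^ 1 := Ideal.pow_le_pow_right (by omega)
      _ ≤ Jc := by simp
  | @insert x G hx ih =>
    intro m hm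
    rw [Finset.card_insert_of_notMem hx] at hm
    have hco : (G.card + 1) * M = G.card * M + M := by ring
    rw [Finset.coe_insert, Ideal.span_insert, ← Submodule.add_eq_sup, add_pow]
    apply sum_le_of_forall_le'
    intro k hk
    rcases Nat.lt_or_ge k M with hkM | hkM
    · have h1 : Ideal.span {x} ^ k * Ideal.span (↑G : Set R) ^ (m - k) * (m.choose k : Ideal R)
          ≤ Ideal.span (↑G : Set R) ^ (m - k) :=
        le_trans Ideal.mul_le_left Ideal.mul_le_right
      refine h1.trans (ih (fun g hg => hG g (Finset.mem_insert_of_mem hg)) _ (by omega))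
    · have h1 : Ideal.span {x} ^ k * Ideal.span (↑G : Set R) ^ (m - k) * (m.choose k : Ideal R)
          ≤ Ideal.span {x} ^ k :=
        le_trans Ideal.mul_le_left Ideal.mul_le_left
      refine h1.trans ?_
      rw [Ideal.span_singleton_pow, Ideal.span_le, Set.singleton_subset_iff]
      have : x ^ k = x ^ M * x ^ (k - M) := by rw [← pow_add]; congr 1; omega
      rw [SetLike.mem_coe, this]
      exact Ideal.mul_mem_right _ _ (hG x (Finset.mem_insert_self _ _))

lemma exists_C [IsNoetherianRing R] (J : ℕ → Ideal R) (p : ℕ)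
    (hfam : ∀ e, (J e).frobPow p ≤ J (e + 1)) (K : Ideal R) (hK : K ≤ (J 0).radical) :
    ∃ C : ℕ, ∀ e m, C * p ^ e ≤ m → 0 < p ^ e → K ^ m ≤ J e := by
  classical
  obtain ⟨G, hG⟩ := (IsNoetherian.noetherian K : K.FG)
  obtain ⟨N, hN, hNmem⟩ := exists_uniform_N G (J 0)
    (fun g hg => hK (hG ▸ Ideal.subset_span hg))
  refine ⟨G.card * N + 1, fun e m hm hpe => ?_⟩
  rw [← hG]
  apply span_pow_le G (J e) (N * p ^ e)
  · intro g hg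
    have : g ^ (N * p ^ e) = (g ^ N) ^ p ^ e := by rw [← pow_mul]
    rw [this]
    exact pow_mem_family J p hfam (hNmem g hg) e
  · have : (G.card * N + 1) * p ^ e = G.card * (N * p ^ e) + p ^ e := by ring
    omega

lemma vnu_mono {t : ℕ} {f g : Fin t → Ideal R} (h : ∀ i, f i ≤ g i) (J' : Ideal R) :
    Vnu f J' ⊆ Vnu g J' := by
  intro a ha hle
  exact ha (le_trans (prod_ideal_mono _ _ _ fun i _ =>
    Ideal.pow_right_mono (h i) (a i)) hle)

end Aux

lemma count_lemma {t : ℕ} (V W : Set (Fin (t + 1) → ℕ)) (M ℓ : ℕ)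
    (hVW : V ⊆ W)
    (hWbox : ∀ a ∈ W, ∀ i, a i < M)
    (hshift : ∀ a ∈ W, (fun i => a i - ℓ) ∈ V) :
    W.Finite ∧ V.ncard ≤ W.ncard ∧ W.ncard ≤ V.ncard + (t + 1) * (ℓ * M ^ t) := by
  classical
  have hWsub : W ⊆ ↑(Fintype.piFinset fun _ : Fin (t + 1) => Finset.range M) := by
    intro a ha
    simp only [Finset.coe_sort_coe, Finset.mem_coe, Fintype.mem_piFinset, Finset.mem_range]
    exact hWbox a ha
  have hWfin : W.Finite := Set.Finite.subset (Finset.finite_toSet _) hWsub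
  have hVfin : V.Finite := hWfin.subset hVW
  refine ⟨hWfin, Set.ncard_le_ncard hVW hWfin, ?_⟩
  set W1 : Set (Fin (t + 1) → ℕ) := {a ∈ W | ∀ i, ℓ ≤ a i} with hW1
  set W2 : Set (Fin (t + 1) → ℕ) := {a ∈ W | ∃ i, a i < ℓ} with hW2
  have hsplit : W ⊆ W1 ∪ W2 := by
    intro a ha
    by_cases h : ∀ i, ℓ ≤ a i
    · exact Or.inl ⟨ha, h⟩
    · push_neg at h
      exact Or.inr ⟨ha, h⟩
  have hW1fin : W1.Finite := hWfin.subset (Set.sep_subset _ _)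
  have hW2fin : W2.Finite := hWfin.subset (Set.sep_subset _ _)
  have h2 : W.ncard ≤ W1.ncard + W2.ncard :=
    le_trans (Set.ncard_le_ncard hsplit (hW1fin.union hW2fin)) (Set.ncard_union_le _ _)
  have hinj : Set.InjOn (fun a : Fin (t + 1) → ℕ => fun i => a i - ℓ) W1 := by
    intro a ha b hb hab
    funext i
    have ha' : ℓ ≤ a i := ha.2 i
    have hb' : ℓ ≤ b i := hb.2 i
    have := congrFun hab i
    simp only at this
    omega
  have himg : (fun a : Fin (t + 1) → ℕ => fun i => a i - ℓ) '' W1 ⊆ V := by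
    rintro _ ⟨a, ha, rfl⟩
    exact hshift a ha.1
  have h3 : W1.ncard ≤ V.ncard := by
    rw [← Set.ncard_image_of_injOn hinj]
    exact Set.ncard_le_ncard himg hVfin
  have h4 : W2.ncard ≤ (t + 1) * (ℓ * M ^ t) := by
    set bigF : Finset (Fin (t + 1) → ℕ) :=
      Finset.univ.biUnion fun i =>
        Fintype.piFinset fun j => Finset.range (if j = i then min ℓ M else M) with hbigF
    have hsub : W2 ⊆ ↑bigF := by
      rintro a ⟨haW, i, hi⟩
      simp only [hbigF, Finset.coe_biUnion, Finset.coe_univ, Set.mem_iUnion,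
        Finset.mem_coe, Fintype.mem_piFinset, Finset.mem_range]
      refine ⟨i, trivial, fun j => ?_⟩
      by_cases hji : j = i
      · subst hji
        simp only [if_pos rfl]
        exact lt_min hi (hWbox a haW j)
      · simp only [if_neg hji]
        exact hWbox a haW j
    have hc1 : W2.ncard ≤ bigF.card := by
      have := Set.ncard_le_ncard hsub (Finset.finite_toSet _)
      rwa [Set.ncard_coe_finset] at this
    have hc2 : bigF.card ≤ ∑ i : Fin (t + 1),
        (Fintype.piFinset fun j => Finset.range (if j = i then min ℓ M else M)).card :=
      Finset.card_biUnion_le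
    have hc3 : ∀ i : Fin (t + 1),
        (Fintype.piFinset fun j => Finset.range (if j = i then min ℓ M else M)).card
          ≤ ℓ * M ^ t := by
      intro i
      rw [Fintype.card_piFinset]
      simp only [Finset.card_range]
      have hprod : ∏ j : Fin (t + 1), (if j = i then min ℓ M else M)
          = min ℓ M * ∏ j ∈ Finset.univ.erase i, (if j = i then min ℓ M else M) := by
        rw [← Finset.mul_prod_erase Finset.univ _ (Finset.mem_univ i), if_pos rfl]
      rw [hprod]
      have herase : ∏ j ∈ Finset.univ.erase i, (if j = i then min ℓ M else M) = M ^ t := by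
        rw [Finset.prod_congr rfl fun j hj => if_neg (Finset.ne_of_mem_erase hj)]
        rw [Finset.prod_const, Finset.card_erase_of_mem (Finset.mem_univ i)]
        simp
      rw [herase]
      exact Nat.mul_le_mul_right _ (min_le_left _ _)
    calc W2.ncard ≤ bigF.card := hc1
      _ ≤ ∑ i : Fin (t + 1), (Fintype.piFinset fun j =>
            Finset.range (if j = i then min ℓ M else M)).card := hc2
      _ ≤ Finset.univ.card • (ℓ * M ^ t) :=
          Finset.sum_le_card_nsmul _ _ _ fun i _ => hc3 i
      _ = (t + 1) * (ℓ * M ^ t) := by simp [smul_eq_mul]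
  omega

lemma sandwich_tendsto {t : ℕ} (p C ℓ : ℕ) (hp : 2 ≤ p) (L : ℝ) (v w : ℕ → ℕ)
    (hlow : ∀ e, v e ≤ w e)
    (hup : ∀ e, w e ≤ v e + (t + 1) * (ℓ * (C * p ^ e) ^ t))
    (hL : Tendsto (fun e : ℕ => (v e : ℝ) / (p : ℝ) ^ (e * (t + 1))) atTop (nhds L)) :
    Tendsto (fun e : ℕ => (w e : ℝ) / (p : ℝ) ^ (e * (t + 1))) atTop (nhds L) := by
  have hp0 : (0 : ℝ) < (p : ℝ) := by positivity
  have hp1 : (1 : ℝ) < (p : ℝ) := by exact_mod_cast hp.trans_lt' one_lt_two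
  set K : ℝ := (((t + 1) * (ℓ * C ^ t) : ℕ) : ℝ) with hK
  have hDpos : ∀ e : ℕ, (0 : ℝ) < (p : ℝ) ^ (e * (t + 1)) := fun e => by positivity
  have hupper : ∀ e : ℕ, (w e : ℝ) / (p : ℝ) ^ (e * (t + 1))
      ≤ (v e : ℝ) / (p : ℝ) ^ (e * (t + 1)) + K * ((p : ℝ)⁻¹) ^ e := by
    intro e
    have hD : ((p : ℝ)) ^ (e * (t + 1)) = ((p : ℝ) ^ e) ^ t * (p : ℝ) ^ e := by
      rw [← pow_mul, ← pow_add]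
      ring_nf
    have hcast : (w e : ℝ) ≤ (v e : ℝ) + (K * ((p : ℝ) ^ e) ^ t) := by
      have := hup e
      have h2 : ((v e + (t + 1) * (ℓ * (C * p ^ e) ^ t) : ℕ) : ℝ)
          = (v e : ℝ) + K * ((p : ℝ) ^ e) ^ t := by
        push_cast [hK]
        ring
      calc (w e : ℝ) ≤ ((v e + (t + 1) * (ℓ * (C * p ^ e) ^ t) : ℕ) : ℝ) := by
            exact_mod_cast this
        _ = _ := h2
    have hstep : (w e : ℝ) / (p : ℝ) ^ (e * (t + 1))
        ≤ ((v e : ℝ) + K * ((p : ℝ) ^ e) ^ t) / (p : ℝ) ^ (e * (t + 1)) := by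
      gcongr
    refine hstep.trans (le_of_eq ?_)
    rw [hD, add_div]
    congr 1
    rw [div_eq_iff (by positivity)]
    rw [inv_pow]
    field_simp
  have hlower : ∀ e : ℕ, (v e : ℝ) / (p : ℝ) ^ (e * (t + 1))
      ≤ (w e : ℝ) / (p : ℝ) ^ (e * (t + 1)) := by
    intro e
    gcongr
    exact_mod_cast hlow e
  have herr : Tendsto (fun e : ℕ => K * ((p : ℝ)⁻¹) ^ e) atTop (nhds 0) := by
    have h0 : Tendsto (fun e : ℕ => ((p : ℝ)⁻¹) ^ e) atTop (nhds 0) :=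
      tendsto_pow_atTop_nhds_zero_of_lt_one (by positivity) (inv_lt_one_of_one_lt₀ hp1)
    simpa using h0.const_mul K
  have hu : Tendsto (fun e : ℕ => (v e : ℝ) / (p : ℝ) ^ (e * (t + 1))
      + K * ((p : ℝ)⁻¹) ^ e) atTop (nhds L) := by
    simpa using hL.add herr
  exact tendsto_of_tendsto_of_tendsto_of_le_of_le hL hu hlower hupper

/-- The F-volume is unchanged upon replacing `I₁` by its integral closure, and hence upon
replacing every `Iⱼ` by its integral closure. -/
theorem stmt6 {R : Type*} [CommRing R] [IsNoetherianRing R] (p : ℕ) [Fact p.Prime]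
    [CharP R p] {t : ℕ} (I : Fin (t + 1) → Ideal R) (J : ℕ → Ideal R)
    (hfam : ∀ e, (J e).frobPow p ≤ J (e + 1))
    (hrad : ∀ i, I i ≤ (J 0).radical) (L : ℝ)
    (hL : Tendsto (fun e : ℕ => ((Vnu I (J e)).ncard : ℝ) / (p : ℝ) ^ (e * (t + 1)))
      atTop (nhds L)) :
    Tendsto
      (fun e : ℕ => ((Vnu (Function.update I 0 (I 0).intCl) (J e)).ncard : ℝ) /
        (p : ℝ) ^ (e * (t + 1))) atTop (nhds L) ∧
    Tendsto
      (fun e : ℕ => ((Vnu (fun i => (I i).intCl) (J e)).ncard : ℝ) /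
        (p : ℝ) ^ (e * (t + 1))) atTop (nhds L) := by
  classical
  have hp2 : 2 ≤ p := (Fact.out : p.Prime).two_le
  set K : Fin (t + 1) → Ideal R := fun i => (I i).intCl with hKdef
  have hIK : ∀ i, I i ≤ K i := fun i => le_intCl (I i)
  have hKrad : ∀ i, K i ≤ (J 0).radical := by
    intro i
    rw [hKdef]
    show Ideal.span (intSet (I i)) ≤ (J 0).radical
    exact Ideal.span_le.mpr (intSet_subset_radical (I i) (hrad i))
  have hCex : ∀ i, ∃ C : ℕ, ∀ e m, C * p ^ e ≤ m → 0 < p ^ e → K i ^ m ≤ J e :=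
    fun i => exists_C J p hfam (K i) (hKrad i)
  choose Cf hCf using hCex
  set C : ℕ := Finset.univ.sup Cf with hCdef
  have hC : ∀ (i : Fin (t + 1)) (e m : ℕ), C * p ^ e ≤ m → K i ^ m ≤ J e := by
    intro i e m hm
    refine hCf i e m ?_ (Nat.pow_pos (by omega))
    exact le_trans (Nat.mul_le_mul_right _ (Finset.le_sup (Finset.mem_univ i))) hm
  have hLex : ∀ i, ∃ ℓ : ℕ, ∀ m, (K i) ^ m ≤ (I i) ^ (m - ℓ) :=
    fun i => intCl_pow_le (I i)
  choose ℓf hℓf using hLex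
  set ℓ : ℕ := Finset.univ.sup ℓf with hℓdef
  have hℓ : ∀ (i : Fin (t + 1)) (m : ℕ), K i ^ m ≤ I i ^ (m - ℓ) := by
    intro i m
    refine (hℓf i m).trans (Ideal.pow_le_pow_right ?_)
    have := Finset.le_sup (f := ℓf) (Finset.mem_univ i)
    omega
  set U : Fin (t + 1) → Ideal R := Function.update I 0 (I 0).intCl with hUdef
  have hIU : ∀ i, I i ≤ U i := by
    intro i
    rcases eq_or_ne i 0 with rfl | h
    · rw [hUdef, Function.update_self]
      exact hIK 0
    · rw [hUdef, Function.update_of_ne h]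
  have hUK : ∀ i, U i ≤ K i := by
    intro i
    rcases eq_or_ne i 0 with rfl | h
    · rw [hUdef, Function.update_self]
    · rw [hUdef, Function.update_of_ne h]
      exact hIK i
  have hbox : ∀ e, ∀ a ∈ Vnu K (J e), ∀ i, a i < C * p ^ e := by
    intro e a ha i
    by_contra hcon
    push_neg at hcon
    exact ha (le_trans (prod_le_factor (fun j => K j ^ a j) i) (hC i e (a i) hcon))
  have hshift : ∀ e, ∀ a ∈ Vnu K (J e), (fun i => a i - ℓ) ∈ Vnu I (J e) := by
    intro e a ha hle
    exact ha (le_trans (prod_ideal_mono _ _ _ fun i _ => hℓ i (a i)) hle)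
  have hcount2 : ∀ e, (Vnu K (J e)).Finite ∧
      (Vnu I (J e)).ncard ≤ (Vnu K (J e)).ncard ∧
      (Vnu K (J e)).ncard ≤ (Vnu I (J e)).ncard + (t + 1) * (ℓ * (C * p ^ e) ^ t) :=
    fun e => count_lemma _ _ _ _ (vnu_mono hIK (J e)) (hbox e) (hshift e)
  have hcount1 : ∀ e, (Vnu U (J e)).Finite ∧
      (Vnu I (J e)).ncard ≤ (Vnu U (J e)).ncard ∧
      (Vnu U (J e)).ncard ≤ (Vnu I (J e)).ncard + (t + 1) * (ℓ * (C * p ^ e) ^ t) :=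
    fun e => count_lemma _ _ _ _ (vnu_mono hIU (J e))
      (fun a ha i => hbox e a (vnu_mono hUK (J e) ha) i)
      (fun a ha => hshift e a (vnu_mono hUK (J e) ha))
  constructor
  · exact sandwich_tendsto p C ℓ hp2 L _ _
      (fun e => (hcount1 e).2.1) (fun e => (hcount1 e).2.2) hL
  · exact sandwich_tendsto p C ℓ hp2 L _ _
      (fun e => (hcount2 e).2.1) (fun e => (hcount2 e).2.2) hL
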